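/- arXiv:1805.00009 — 10 statements merged into one kernel-verified Lean document; each statement's English description precedes it below -/
import Mathlib

section
/- If δ : R → R is an additive generalized Jordan derivation with relating Jordan derivation τ on a 2-torsion free ring R, then δ(aba) = δ(a)ba + aτ(b)a + abτ(a) for all a, b ∈ R. -/
theorem stmt_1 {R : Type*} [Ring R]
    (htf : ∀ x : R, x + x = 0 → x = 0)
    (δ τ : R → R)
    (hδadd : ∀ x y, δ (x + y) = δ x + δ y)
    (hτadd : ∀ x y, τ (x + y) = τ x + τ y)
    (hτ : ∀ a, τ (a ^ 2) = τ a * a + a * τ a)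
    (hδ : ∀ a, δ (a ^ 2) = δ a * a + a * τ a) :
    ∀ a b : R, δ (a * b * a) = δ a * b * a + a * τ b * a + a * b * τ a := by
  -- linearized τ
  have hτlin : ∀ a b : R, τ (a * b + b * a) = τ a * b + τ b * a + a * τ b + b * τ a := by
    intro a b
    have e1 : (a + b) ^ 2 = a ^ 2 + (a * b + b * a) + b ^ 2 := by noncomm_ring
    have h := hτ (a + b)
    rw [e1, hτadd, hτadd, hτ a, hτ b, hτadd a b] at h
    linear_combination (norm := noncomm_ring) h
  have hδlin : ∀ a b : R, δ (a * b + b * a) = δ a * b + δ b * a + a * τ b + b * τ a := by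
    intro a b
    have e1 : (a + b) ^ 2 = a ^ 2 + (a * b + b * a) + b ^ 2 := by noncomm_ring
    have h := hδ (a + b)
    rw [e1, hδadd, hδadd, hδ a, hδ b, hδadd a b, hτadd a b] at h
    linear_combination (norm := noncomm_ring) h
  intro a b
  -- compute δ(a²b + ba²) two ways
  have e2 : a * (a * b + b * a) + (a * b + b * a) * a
      = (a ^ 2 * b + b * a ^ 2) + (a * b * a + a * b * a) := by noncomm_ring
  have h1 := hδlin a (a * b + b * a)
  rw [e2, hδadd (a ^ 2 * b + b * a ^ 2) (a * b * a + a * b * a),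
    hδadd (a * b * a) (a * b * a), hτlin a b, hδlin a b] at h1
  have h2 := hδlin (a ^ 2) b
  rw [hδ a, hτ a] at h2
  rw [h2] at h1
  have h3 : δ (a * b * a) + δ (a * b * a)
      = (δ a * b * a + a * τ b * a + a * b * τ a)
        + (δ a * b * a + a * τ b * a + a * b * τ a) := by
    linear_combination (norm := noncomm_ring) h1
  have := htf (δ (a * b * a) - (δ a * b * a + a * τ b * a + a * b * τ a))
    (by linear_combination (norm := noncomm_ring) h3)
  linear_combination (norm := noncomm_ring) this
end

section
/- If δ : R → R is an additive generalized Jordan derivation with relating Jordan derivation τ on a 2-torsion free ring R, then δ(abc + cba) = δ(a)bc + aτ(b)c + abτ(c) + δ(c)ba + cτ(b)a + cbτ(a) for all a, b, c ∈ R. -/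
theorem stmt_2 {R : Type*} [Ring R]
    (htf : ∀ x : R, x + x = 0 → x = 0)
    (δ τ : R → R)
    (hδadd : ∀ x y, δ (x + y) = δ x + δ y)
    (hτadd : ∀ x y, τ (x + y) = τ x + τ y)
    (hτ : ∀ a, τ (a ^ 2) = τ a * a + a * τ a)
    (hδ : ∀ a, δ (a ^ 2) = δ a * a + a * τ a) :
    ∀ a b c : R, δ (a * b * c + c * b * a) =
      δ a * b * c + a * τ b * c + a * b * τ c +
      δ c * b * a + c * τ b * a + c * b * τ a := by
  have hTlin : ∀ x y : R, τ (x * y + y * x) = τ x * y + x * τ y + τ y * x + y * τ x := by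
    intro x y
    have h1 : τ ((x + y) ^ 2) = τ (x + y) * (x + y) + (x + y) * τ (x + y) := hτ _
    rw [show (x + y) ^ 2 = x ^ 2 + (x * y + y * x) + y ^ 2 from by noncomm_ring,
      hτadd (x ^ 2 + (x * y + y * x)) (y ^ 2), hτadd (x ^ 2) (x * y + y * x),
      hτ x, hτ y, hτadd x y] at h1
    linear_combination (norm := noncomm_ring) h1
  have hDlin : ∀ x y : R, δ (x * y + y * x) = δ x * y + x * τ y + δ y * x + y * τ x := by
    intro x y
    have h1 : δ ((x + y) ^ 2) = δ (x + y) * (x + y) + (x + y) * τ (x + y) := hδ _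
    rw [show (x + y) ^ 2 = x ^ 2 + (x * y + y * x) + y ^ 2 from by noncomm_ring,
      hδadd (x ^ 2 + (x * y + y * x)) (y ^ 2), hδadd (x ^ 2) (x * y + y * x),
      hδ x, hδ y, hδadd x y, hτadd x y] at h1
    linear_combination (norm := noncomm_ring) h1
  have haba : ∀ a b : R, δ (a * b * a) = δ a * b * a + a * τ b * a + a * b * τ a := by
    intro a b
    have h1 := hDlin a (a * b + b * a)
    have h2 := hDlin (a ^ 2) b
    rw [hδ, hτ] at h2
    rw [show a * (a * b + b * a) + (a * b + b * a) * a
        = (a ^ 2 * b + b * a ^ 2) + (a * b * a + a * b * a) from by noncomm_ring,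
      hδadd (a ^ 2 * b + b * a ^ 2) (a * b * a + a * b * a),
      hδadd (a * b * a) (a * b * a), h2, hTlin a b, hDlin a b] at h1
    have h4 : (δ (a * b * a) - (δ a * b * a + a * τ b * a + a * b * τ a))
        + (δ (a * b * a) - (δ a * b * a + a * τ b * a + a * b * τ a)) = 0 := by
      linear_combination (norm := noncomm_ring) h1
    exact sub_eq_zero.mp (htf _ h4)
  intro a b c
  have h1 := haba (a + c) b
  rw [show (a + c) * b * (a + c)
      = a * b * a + (a * b * c + c * b * a) + c * b * c from by noncomm_ring,
    hδadd (a * b * a + (a * b * c + c * b * a)) (c * b * c),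
    hδadd (a * b * a) (a * b * c + c * b * a),
    hδadd (a * b * c) (c * b * a),
    haba a b, haba c b, hδadd a c, hτadd a c] at h1
  rw [hδadd (a * b * c) (c * b * a)]
  linear_combination (norm := noncomm_ring) h1
end

section
/- Let e be an idempotent in a ring R and τ : R → R a Jordan derivation. Then there exists s ∈ R such that τ(e) = es − se; explicitly, one can take s = eτ(e)(1−e) − (1−e)τ(e)e. -/
theorem stmt_3 {R : Type*} [Ring R] (e : R) (he : e * e = e)
    (τ : R → R)
    (hτadd : ∀ x y, τ (x + y) = τ x + τ y)
    (hτ : ∀ a, τ (a ^ 2) = τ a * a + a * τ a) :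
    τ e = e * (e * τ e * (1 - e) - (1 - e) * τ e * e)
        - (e * τ e * (1 - e) - (1 - e) * τ e * e) * e ∧
      ∃ s : R, τ e = e * s - s * e := by
  have h : τ e = τ e * e + e * τ e := by
    have := hτ e; rwa [sq, he] at this
  have h2 : e * τ e * e = e * (τ e * e + e * τ e) * e := by rw [← h]
  have hx : e * (τ e * e + e * τ e) * e = e * τ e * e + e * τ e * e := by
    simp only [mul_add, add_mul, ← mul_assoc]
    rw [mul_assoc (e * τ e) e e, he]
  have h4 : e * τ e * e + 0 = e * τ e * e + e * τ e * e := by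
    rw [add_zero]; exact h2.trans hx
  have h0 : e * τ e * e = 0 := (add_left_cancel h4).symm
  have key : τ e = e * (e * τ e * (1 - e) - (1 - e) * τ e * e)
        - (e * τ e * (1 - e) - (1 - e) * τ e * e) * e := by
    linear_combination (norm := noncomm_ring) h - he * τ e - τ e * he + 2 * h0
  exact ⟨key, ⟨_, key⟩⟩
end

section
/- Let Δ : R → R be an additive generalized Jordan derivation with relating Jordan derivation Ξ satisfying Ξ(e₁) = 0. Then for all a₁₁ ∈ e₁Re₁: Δ(a₁₁) = Δ(e₁)a₁₁ + Ξ(a₁₁). -/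
theorem stmt_10 {R : Type*} [Ring R]
    (htf : ∀ x : R, x + x = 0 → x = 0)
    (e₁ : R) (he : e₁ * e₁ = e₁) (he0 : e₁ ≠ 0) (he1 : e₁ ≠ 1)
    (Δ Ξ : R → R)
    (hΔadd : ∀ x y, Δ (x + y) = Δ x + Δ y)
    (hΞadd : ∀ x y, Ξ (x + y) = Ξ x + Ξ y)
    (hΞ : ∀ a, Ξ (a ^ 2) = Ξ a * a + a * Ξ a)
    (hΔ : ∀ a, Δ (a ^ 2) = Δ a * a + a * Ξ a)
    (hΞe : Ξ e₁ = 0) :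
    ∀ x : R, Δ (e₁ * x * e₁) = Δ e₁ * (e₁ * x * e₁) + Ξ (e₁ * x * e₁) := by
  intro x
  set G : R → R := fun y => Δ y - Ξ y with hG
  have hGadd : ∀ y z, G (y + z) = G y + G z := by
    intro y z; simp only [hG, hΔadd, hΞadd]; abel
  have hGsq : ∀ y, G (y ^ 2) = G y * y := by
    intro y; simp only [hG, hΔ, hΞ]; noncomm_ring
  set a := e₁ * x * e₁ with ha
  have hea : e₁ * a = a := by rw [ha, ← mul_assoc, ← mul_assoc, he]
  have hae : a * e₁ = a := by rw [ha, mul_assoc, mul_assoc, he, mul_assoc]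
  have hGe : G e₁ = G e₁ * e₁ := by
    have h := hGsq e₁
    rwa [show e₁ ^ 2 = e₁ by rw [sq, he]] at h
  have hGaa : G (a * a) = G a * a := by rw [← sq]; exact hGsq a
  have hsq : (e₁ + a) * (e₁ + a) = e₁ + a + (a + a * a) := by
    rw [add_mul, mul_add, mul_add, he, hea, hae]
  have h1 : G e₁ + G a + (G a + G a * a)
      = G e₁ + G a * e₁ + (G e₁ * a + G a * a) := by
    have h := hGsq (e₁ + a)
    rw [sq, hsq, hGadd, hGadd, hGadd, hGaa, mul_add, add_mul, add_mul, ← hGe] at h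
    exact h
  have eq1 : G a + G a = G a * e₁ + G e₁ * a := by
    have h0 : G a + G a - (G a * e₁ + G e₁ * a)
        = (G e₁ + G a + (G a + G a * a)) - (G e₁ + G a * e₁ + (G e₁ * a + G a * a)) := by
      abel
    rw [h1, sub_self] at h0
    exact sub_eq_zero.mp h0
  have eq2 : G a * e₁ = G e₁ * a := by
    have h2 := congrArg (· * e₁) eq1
    simp only [add_mul, mul_assoc, he, hae] at h2
    exact add_left_cancel h2
  have eq3 : G a = G e₁ * a := by
    apply sub_eq_zero.mp
    apply htf
    have h0 : G a - G e₁ * a + (G a - G e₁ * a)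
        = (G a + G a) - (G e₁ * a + G e₁ * a) := by abel
    rw [h0, eq1, eq2, sub_self]
  have hfin : Δ a - Ξ a = (Δ e₁ - Ξ e₁) * a := eq3
  rw [hΞe, sub_zero] at hfin
  exact eq_add_of_sub_eq hfin
end

section
/- Let Δ : R → R be an additive generalized Jordan derivation with relating Jordan derivation Ξ satisfying Ξ(e₁) = 0, e₂ = 1 − e₁. Then for all a₂₂ ∈ e₂Re₂: Δ(a₂₂) = Δ(e₂)a₂₂ + Ξ(a₂₂). -/
theorem stmt_11 {R : Type*} [Ring R]
    (htf : ∀ x : R, x + x = 0 → x = 0)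
    (e₁ : R) (he : e₁ * e₁ = e₁) (he0 : e₁ ≠ 0) (he1 : e₁ ≠ 1)
    (Δ Ξ : R → R)
    (hΔadd : ∀ x y, Δ (x + y) = Δ x + Δ y)
    (hΞadd : ∀ x y, Ξ (x + y) = Ξ x + Ξ y)
    (hΞ : ∀ a, Ξ (a ^ 2) = Ξ a * a + a * Ξ a)
    (hΔ : ∀ a, Δ (a ^ 2) = Δ a * a + a * Ξ a)
    (hΞe : Ξ e₁ = 0) :
    ∀ x : R, Δ ((1 - e₁) * x * (1 - e₁)) =
      Δ (1 - e₁) * ((1 - e₁) * x * (1 - e₁)) + Ξ ((1 - e₁) * x * (1 - e₁)) := by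
  intro x
  set e₂ : R := 1 - e₁ with he₂def
  set a : R := e₂ * x * e₂ with hadef
  have he₂ : e₂ * e₂ = e₂ := by
    rw [he₂def, sub_mul, one_mul, mul_sub, mul_one, he, sub_self, sub_zero]
  have he₁₂ : e₁ * e₂ = 0 := by rw [he₂def, mul_sub, mul_one, he, sub_self]
  have he₂₁ : e₂ * e₁ = 0 := by rw [he₂def, sub_mul, one_mul, he, sub_self]
  have he₁a : e₁ * a = 0 := by
    rw [hadef, ← mul_assoc, ← mul_assoc, he₁₂, zero_mul, zero_mul]
  have hae₁ : a * e₁ = 0 := by rw [hadef, mul_assoc, he₂₁, mul_zero]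
  have he₂a : e₂ * a = a := by rw [hadef, ← mul_assoc, ← mul_assoc, he₂]
  have hae₂ : a * e₂ = a := by rw [hadef, mul_assoc, he₂, mul_assoc]
  have hΞ1 : Ξ 1 = 0 := by
    have h := hΞ 1
    rw [one_pow, mul_one, one_mul] at h
    exact left_eq_add.mp h
  have hΞe₂ : Ξ e₂ = 0 := by
    have h := hΞadd e₂ e₁
    rw [he₂def, sub_add_cancel, hΞ1, hΞe, add_zero] at h
    exact h.symm
  have hΔe₁ : Δ e₁ * e₁ = Δ e₁ := by
    have h := hΔ e₁
    rw [pow_two, he, hΞe, mul_zero, add_zero] at h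
    exact h.symm
  have hΔe₂ : Δ e₂ * e₂ = Δ e₂ := by
    have h := hΔ e₂
    rw [pow_two, he₂, hΞe₂, mul_zero, add_zero] at h
    exact h.symm
  have hsq1 : (e₁ + a) ^ 2 = e₁ + a ^ 2 := by
    rw [pow_two, pow_two, add_mul, mul_add, mul_add, he, he₁a, hae₁]
    abel
  have hsq2 : e₂ + (a + a) + a ^ 2 = (e₂ + a) ^ 2 := by
    rw [pow_two, pow_two, add_mul, mul_add, mul_add, he₂, he₂a, hae₂]
    abel
  have h1 := hΞ (e₁ + a)
  rw [hsq1] at h1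
  simp only [hΞadd, hΞ a, hΞe, zero_add, add_mul, mul_add] at h1
  have h2 := hΔ (e₁ + a)
  rw [hsq1] at h2
  simp only [hΔadd, hΞadd, hΔ a, hΞe, zero_add, add_mul, mul_add, hΔe₁] at h2
  have h3 := hΔ (e₂ + a)
  rw [← hsq2] at h3
  simp only [hΔadd, hΞadd, hΔ a, hΞe₂, zero_add, add_mul, mul_add, hΔe₂] at h3
  have hA : Ξ a * e₁ + e₁ * Ξ a = 0 := by
    have hx : Ξ a * e₁ + e₁ * Ξ a
        = (Ξ a * e₁ + Ξ a * a + (e₁ * Ξ a + a * Ξ a)) - (Ξ a * a + a * Ξ a) := by abel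
    rw [hx, ← h1, sub_self]
  have he₁Ξae₁ : e₁ * Ξ a * e₁ = e₁ * Ξ a := by
    have hn : e₁ * Ξ a = -(Ξ a * e₁) := by
      rw [eq_neg_iff_add_eq_zero, add_comm]; exact hA
    rw [hn, neg_mul, mul_assoc, he]
  have hB : Δ a * e₁ + Δ e₁ * a + e₁ * Ξ a = 0 := by
    have hx : Δ a * e₁ + Δ e₁ * a + e₁ * Ξ a
        = (Δ e₁ + Δ a * e₁ + (Δ e₁ * a + Δ a * a) + (e₁ * Ξ a + a * Ξ a))
          - (Δ e₁ + (Δ a * a + a * Ξ a)) := by abel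
    rw [hx, ← h2, sub_self]
  have hD : Δ a * e₁ = -(e₁ * Ξ a) := by
    have h := congrArg (· * e₁) hB
    simp only [add_mul, zero_mul] at h
    rw [mul_assoc (Δ a), he, mul_assoc (Δ e₁), hae₁, mul_zero, add_zero, he₁Ξae₁] at h
    exact eq_neg_of_add_eq_zero_left h
  have hDe2 : Δ a * e₂ = Δ a + e₁ * Ξ a := by
    rw [he₂def, mul_sub, mul_one, hD, sub_neg_eq_add]
  have he2Ξ : e₂ * Ξ a = Ξ a - e₁ * Ξ a := by
    rw [he₂def, sub_mul, one_mul]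
  rw [hDe2, he2Ξ] at h3
  have h4 : (Δ a + Δ a) - (Δ a + (Δ e₂ * a + Ξ a))
      = (Δ e₂ + (Δ a + Δ a) + (Δ a * a + a * Ξ a))
        - (Δ e₂ + (Δ a + e₁ * Ξ a) + (Δ e₂ * a + Δ a * a) + (Ξ a - e₁ * Ξ a + a * Ξ a)) := by
    abel
  rw [h3, sub_self] at h4
  exact add_left_cancel (sub_eq_zero.mp h4)
end

section
/- Let Δ : R → R be an additive generalized Jordan derivation with relating Jordan derivation Ξ, with Ξ(e₁) = 0, e₂ = 1 − e₁. Then Δ(a₂₁b₁₂) = Δ(a₂₁)b₁₂ + a₂₁Ξ(b₁₂) for all a₂₁ ∈ e₂Re₁, b₁₂ ∈ e₁Re₂. -/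
theorem stmt_13 {R : Type*} [Ring R]
    (htf : ∀ x : R, x + x = 0 → x = 0)
    (e₁ : R) (he : e₁ * e₁ = e₁) (he0 : e₁ ≠ 0) (he1 : e₁ ≠ 1)
    (Δ Ξ : R → R)
    (hΔadd : ∀ x y, Δ (x + y) = Δ x + Δ y)
    (hΞadd : ∀ x y, Ξ (x + y) = Ξ x + Ξ y)
    (hΞ : ∀ a, Ξ (a ^ 2) = Ξ a * a + a * Ξ a)
    (hΔ : ∀ a, Δ (a ^ 2) = Δ a * a + a * Ξ a)
    (hΞe : Ξ e₁ = 0) :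
    ∀ x y : R,
      Δ (((1 - e₁) * x * e₁) * (e₁ * y * (1 - e₁))) =
        Δ ((1 - e₁) * x * e₁) * (e₁ * y * (1 - e₁)) +
          ((1 - e₁) * x * e₁) * Ξ (e₁ * y * (1 - e₁)) := by
  -- polarized identities
  have keyΔ : ∀ a b : R, Δ (a*b + b*a) = Δ a * b + a * Ξ b + Δ b * a + b * Ξ a := by
    intro a b
    have h := hΔ (a + b)
    have e2 : (a + b)^2 = a^2 + (a*b + b*a) + b^2 := by noncomm_ring
    rw [e2, hΔadd, hΔadd, hΔ a, hΔ b, hΔadd a b, hΞadd a b] at h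
    have h2 : Δ (a*b + b*a) =
        (Δ a * a + a * Ξ a + Δ (a*b + b*a) + (Δ b * b + b * Ξ b))
          - (Δ a * a + a * Ξ a) - (Δ b * b + b * Ξ b) := by abel
    rw [h2, h]; noncomm_ring
  have keyΞ : ∀ a b : R, Ξ (a*b + b*a) = Ξ a * b + a * Ξ b + Ξ b * a + b * Ξ a := by
    intro a b
    have h := hΞ (a + b)
    have e2 : (a + b)^2 = a^2 + (a*b + b*a) + b^2 := by noncomm_ring
    rw [e2, hΞadd, hΞadd, hΞ a, hΞ b, hΞadd a b] at h
    have h2 : Ξ (a*b + b*a) =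
        (Ξ a * a + a * Ξ a + Ξ (a*b + b*a) + (Ξ b * b + b * Ξ b))
          - (Ξ a * a + a * Ξ a) - (Ξ b * b + b * Ξ b) := by abel
    rw [h2, h]; noncomm_ring
  -- Δ(aba)
  have keyaba : ∀ a b : R, Δ (a*b*a) = Δ a * b * a + a * Ξ b * a + a * b * Ξ a := by
    intro a b
    have h1 := keyΔ a (a*b + b*a)
    have hs : a*(a*b + b*a) + (a*b + b*a)*a = (a^2*b + b*a^2) + (a*b*a + a*b*a) := by
      noncomm_ring
    rw [hs, hΔadd, hΔadd, hΔadd, keyΔ a b, keyΞ a b] at h1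
    have h2 := keyΔ (a^2) b
    rw [hΔ a, hΞ a, hΔadd] at h2
    have hz : (Δ (a*b*a) - (Δ a * b * a + a * Ξ b * a + a * b * Ξ a))
        + (Δ (a*b*a) - (Δ a * b * a + a * Ξ b * a + a * b * Ξ a)) = 0 := by
      have h3 : (Δ (a*b*a) - (Δ a * b * a + a * Ξ b * a + a * b * Ξ a))
          + (Δ (a*b*a) - (Δ a * b * a + a * Ξ b * a + a * b * Ξ a))
          = (Δ (a^2*b) + Δ (b*a^2) + (Δ (a*b*a) + Δ (a*b*a)))
            - (Δ (a^2*b) + Δ (b*a^2))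
            - ((Δ a * b * a + a * Ξ b * a + a * b * Ξ a)
              + (Δ a * b * a + a * Ξ b * a + a * b * Ξ a)) := by abel
      rw [h3, h1, h2]
      noncomm_ring
    exact sub_eq_zero.mp (htf _ hz)
  -- trilinear
  have keytri : ∀ a b c : R, Δ (a*b*c + c*b*a) =
      Δ a * b * c + a * Ξ b * c + a * b * Ξ c
        + (Δ c * b * a + c * Ξ b * a + c * b * Ξ a) := by
    intro a b c
    have h := keyaba (a + c) b
    have hs : (a + c)*b*(a + c) = (a*b*a + c*b*c) + (a*b*c + c*b*a) := by noncomm_ring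
    rw [hs, hΔadd, hΔadd, keyaba a b, keyaba c b, hΔadd a c, hΞadd a c] at h
    have h3 : Δ (a*b*c + c*b*a)
        = ((Δ a * b * a + a * Ξ b * a + a * b * Ξ a)
            + (Δ c * b * c + c * Ξ b * c + c * b * Ξ c) + Δ (a*b*c + c*b*a))
          - (Δ a * b * a + a * Ξ b * a + a * b * Ξ a)
          - (Δ c * b * c + c * Ξ b * c + c * b * Ξ c) := by abel
    rw [h3, h]; noncomm_ring
  -- final computation
  intro x y
  set a : R := (1 - e₁) * x * e₁ with ha
  set b : R := e₁ * y * (1 - e₁) with hb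
  have hae : a * e₁ = a := by rw [ha, mul_assoc, he]
  have heb : e₁ * b = b := by rw [hb]; rw [show e₁ * (e₁ * y * (1 - e₁)) = e₁ * e₁ * y * (1 - e₁) by noncomm_ring, he]
  have hbe : b * e₁ = 0 := by
    rw [hb, show e₁ * y * (1 - e₁) * e₁ = e₁ * y * (e₁ - e₁ * e₁) by noncomm_ring, he]
    simp
  have hea : e₁ * a = 0 := by
    rw [ha, show e₁ * ((1 - e₁) * x * e₁) = (e₁ - e₁ * e₁) * x * e₁ by noncomm_ring, he]
    simp
  have h := keytri a e₁ b
  rw [hΞe] at h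
  rw [show a * e₁ * b = a * b from by rw [hae]] at h
  rw [show b * e₁ * a = (0:R) from by rw [hbe, zero_mul]] at h
  rw [show Δ a * e₁ * b = Δ a * b from by rw [mul_assoc, heb]] at h
  rw [show Δ b * e₁ * a = (0:R) from by rw [mul_assoc, hea, mul_zero]] at h
  rw [show b * e₁ * Ξ a = (0:R) from by rw [hbe, zero_mul]] at h
  rw [show a * e₁ * Ξ b = a * Ξ b from by rw [hae]] at h
  simpa using h
end

section
/- Let R be a 2-torsion free semiprime unital ring with a nontrivial idempotent e₁ (e₂ = 1 − e₁) satisfying: (♠) if x·e₁Re₂ = 0 then e₁xe₁ = 0 and e₂xe₁ = 0; (♣) if x·e₂Re₂ = 0 then e₁xe₂ = 0 and e₂xe₂ = 0. Then every additive generalized Jordan derivation δ : R → R (with relating Jordan derivation τ) is an additive generalized derivation: there exists a derivation τ' with δ(ab) = δ(a)b + aτ'(b) for all a, b ∈ R. -/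
/-- Brešar's Lemma: in a 2-torsion-free semiprime ring,
    `g m h + h m g = 0` for all `m` implies `g x h = 0` for all `x`. -/
theorem lemL1 {R : Type*} [Ring R]
    (htf : ∀ x : R, x + x = 0 → x = 0)
    (hsp : ∀ a : R, (∀ r : R, a * r * a = 0) → a = 0)
    (g h : R) (H : ∀ m : R, g*m*h + h*m*g = 0) : ∀ x : R, g*x*h = 0 := by
  intro x
  refine hsp _ (fun z => htf _ ?_)
  linear_combination (norm := noncomm_ring) H (x*h*z*g*x) + (g*x*h*z) * H x - H (x*h*z) * (x*g)

/-- Brešar's theorem: a Jordan derivation on a 2-torsion-free semiprime ring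
    is a derivation. -/
theorem jordan_der {R : Type*} [Ring R]
    (htf : ∀ x : R, x + x = 0 → x = 0)
    (hsp : ∀ a : R, (∀ r : R, a * r * a = 0) → a = 0)
    (τ : R → R)
    (hadd : ∀ x y : R, τ (x + y) = τ x + τ y)
    (hj : ∀ a : R, τ (a ^ 2) = τ a * a + a * τ a) :
    ∀ a b : R, τ (a * b) = τ a * b + a * τ b := by
  have h0 : τ 0 = 0 := by
    have h := hadd 0 0
    rw [add_zero] at h
    linear_combination (norm := noncomm_ring) -h
  have hneg : ∀ x : R, τ (-x) = - τ x := by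
    intro x
    have h := hadd x (-x)
    rw [add_neg_cancel, h0] at h
    linear_combination (norm := noncomm_ring) -h
  have hsub : ∀ x y : R, τ (x - y) = τ x - τ y := by
    intro x y
    rw [sub_eq_add_neg, hadd, hneg, sub_eq_add_neg]
  have hj' : ∀ a : R, τ (a*a) = τ a * a + a * τ a := by
    intro a; have h := hj a; rwa [sq] at h
  -- P1 : polarized Jordan identity
  have P1 : ∀ a b : R, τ (a*b) + τ (b*a) = τ a * b + a * τ b + τ b * a + b * τ a := by
    intro a b
    have k := hj' (a + b)
    rw [show (a+b)*(a+b) = a*a + (a*b + b*a) + b*b from by noncomm_ring] at k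
    simp only [hadd] at k
    linear_combination (norm := noncomm_ring) k - hj' a - hj' b
  -- P2 : τ(aba) = τ(a)ba + aτ(b)a + abτ(a)
  have P2 : ∀ a b : R, τ (a*b*a) = τ a * b * a + a * τ b * a + a * b * τ a := by
    intro a b
    have k1 := P1 a (a*b + b*a)
    rw [show a*(a*b+b*a) = a*a*b + a*b*a from by noncomm_ring,
        show (a*b+b*a)*a = a*b*a + b*(a*a) from by noncomm_ring] at k1
    simp only [hadd] at k1
    have k2 := P1 (a*a) b
    have hdd : (τ (a*b*a) - (τ a * b * a + a * τ b * a + a * b * τ a))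
        + (τ (a*b*a) - (τ a * b * a + a * τ b * a + a * b * τ a)) = 0 := by
      linear_combination (norm := noncomm_ring) k1 - k2 + a * (P1 a b) + (P1 a b) * a
        - (hj' a) * b - b * (hj' a)
    exact sub_eq_zero.mp (htf _ hdd)
  -- P3 : trilinear version
  have P3 : ∀ a b c : R, τ (a*b*c) + τ (c*b*a)
      = τ a * b * c + a * τ b * c + a * b * τ c + τ c * b * a + c * τ b * a + c * b * τ a := by
    intro a b c
    have k := P2 (a+c) b
    rw [show (a+c)*b*(a+c) = a*b*a + (a*b*c + (c*b*a + c*b*c)) from by noncomm_ring] at k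
    simp only [hadd] at k
    linear_combination (norm := noncomm_ring) k - P2 a b - P2 c b
  -- P5 : G(a,b) x [a,b] + [a,b] x G(a,b) = 0
  have P5 : ∀ a b x : R,
      (τ (a*b) - τ a * b - a * τ b) * x * (a*b - b*a)
      + (a*b - b*a) * x * (τ (a*b) - τ a * b - a * τ b) = 0 := by
    intro a b x
    have c1 : τ ((a*b)*x*(b*a)) = τ (a*(b*x*b)*a) := congrArg τ (by noncomm_ring)
    have c2 : τ ((b*a)*x*(a*b)) = τ (b*(a*x*a)*b) := congrArg τ (by noncomm_ring)
    linear_combination (norm := noncomm_ring) P3 (a*b) x (b*a) - c1 - c2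
      - P2 a (b*x*b) - P2 b (a*x*a) - a * (P2 b x) * a - b * (P2 a x) * b
      + (a*b*x) * (P1 a b) + (P1 a b) * (x*(a*b))
  -- P6 : G(a,b) x [a,b] = 0
  have P6 : ∀ a b x : R, (τ (a*b) - τ a * b - a * τ b) * x * (a*b - b*a) = 0 := by
    intro a b
    exact lemL1 htf hsp _ _ (fun m => P5 a b m)
  -- P8 : G(a,b) x [c,b] = 0
  have P8 : ∀ a b c x : R, (τ (a*b) - τ a * b - a * τ b) * x * (c*b - b*c) = 0 := by
    intro a b c x
    have e1 : τ ((a+c)*b) = τ (a*b) + τ (c*b) := by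
      rw [show (a+c)*b = a*b + c*b from by noncomm_ring, hadd]
    have hlin : (τ (a*b) - τ a * b - a * τ b) * x * (c*b - b*c)
        + (τ (c*b) - τ c * b - c * τ b) * x * (a*b - b*a) = 0 := by
      have k := P6 (a+c) b x
      rw [e1] at k
      simp only [hadd] at k
      linear_combination (norm := noncomm_ring) k - P6 a b x - P6 c b x
    refine hsp _ (fun z => ?_)
    linear_combination (norm := noncomm_ring)
      ((τ (a*b) - τ a * b - a * τ b) * x * (c*b - b*c) * z) * hlin
      - P6 a b (x*(c*b - b*c)*z*(τ (c*b) - τ c * b - c * τ b)*x)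
  -- P9 : G(a,b) x [c,d] = 0
  have P9 : ∀ a b c d x : R, (τ (a*b) - τ a * b - a * τ b) * x * (c*d - d*c) = 0 := by
    intro a b c d x
    have e2 : τ (a*(b+d)) = τ (a*b) + τ (a*d) := by
      rw [show a*(b+d) = a*b + a*d from by noncomm_ring, hadd]
    have hlin : (τ (a*b) - τ a * b - a * τ b) * x * (c*d - d*c)
        + (τ (a*d) - τ a * d - a * τ d) * x * (c*b - b*c) = 0 := by
      have k := P8 a (b+d) c x
      rw [e2] at k
      simp only [hadd] at k
      linear_combination (norm := noncomm_ring) k - P8 a b c x - P8 a d c x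
    refine hsp _ (fun z => ?_)
    linear_combination (norm := noncomm_ring)
      ((τ (a*b) - τ a * b - a * τ b) * x * (c*d - d*c) * z) * hlin
      - P8 a b c (x*(c*d - d*c)*z*(τ (a*d) - τ a * d - a * τ d)*x)
  -- P10 : G(a,b) is central
  have P10 : ∀ a b s : R, (τ (a*b) - τ a * b - a * τ b) * s = s * (τ (a*b) - τ a * b - a * τ b) := by
    intro a b s
    have key : ∀ r : R,
        ((τ (a*b) - τ a * b - a * τ b) * s - s * (τ (a*b) - τ a * b - a * τ b)) * r
        * ((τ (a*b) - τ a * b - a * τ b) * s - s * (τ (a*b) - τ a * b - a * τ b)) = 0 := by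
      intro r
      linear_combination (norm := noncomm_ring)
        P9 a b (τ (a*b) - τ a * b - a * τ b) s (s*r)
        - s * (P9 a b (τ (a*b) - τ a * b - a * τ b) s r)
    exact sub_eq_zero.mp (hsp _ key)
  -- P11 : G(a,b) [c,d] = 0
  have P11 : ∀ a b c d : R, (τ (a*b) - τ a * b - a * τ b) * (c*d - d*c) = 0 := by
    intro a b c d
    have k := P9 a b c d 1
    rwa [mul_one] at k
  -- P12 : G(a, bc) = G(a, cb)
  have P12 : ∀ a b c : R,
      τ (a*(b*c)) - τ a * (b*c) - a * τ (b*c)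
      = τ (a*(c*b)) - τ a * (c*b) - a * τ (c*b) := by
    intro a b c
    have c1 : τ (a*b*c) = τ (a*(b*c)) := congrArg τ (by noncomm_ring)
    linear_combination (norm := noncomm_ring) c1 + P3 a b c - P1 a (c*b)
      - (P1 b c) * a + P10 b c a
  -- P13 : G(g, [c,d]) = 0
  have P13 : ∀ g c d : R,
      τ (g*(c*d - d*c)) - τ g * (c*d - d*c) - g * τ (c*d - d*c) = 0 := by
    intro g c d
    have e : τ (g*(c*d - d*c)) = τ (g*(c*d)) - τ (g*(d*c)) := by
      rw [show g*(c*d - d*c) = g*(c*d) - g*(d*c) from by noncomm_ring, hsub]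
    have e2 : τ (c*d - d*c) = τ (c*d) - τ (d*c) := hsub _ _
    linear_combination (norm := noncomm_ring) e - g * e2 + P12 g c d
  -- Final: kill g := G(a,b)
  intro a b
  have f1 := P11 a b a b
  have f3 := P13 (τ (a*b) - τ a * b - a * τ b) a b
  have f6 := P11 a b (τ a) b
  have f7 := P11 a b a (τ b)
  have f8 := P10 a b (a*b - b*a)
  have f9 := P10 a b
  set g := τ (a*b) - τ a * b - a * τ b with hgd
  have f2 : τ (g * (a*b - b*a)) = 0 := by rw [f1]; exact h0
  have f4 : τ (a*b - b*a) = τ (a*b) - τ (b*a) := hsub _ _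
  have f5 := P1 a b
  have hggg : g*g*g + g*g*g = 0 := by
    linear_combination (norm := noncomm_ring)
      (f2 - f3) * g + (τ g) * f8 - (τ g) * f1 - g * f4 * g + g * f5 * g
      + g * hgd * g + g * hgd * g - f6 * g - f7 * g
  have hcube : g*g*g = 0 := htf _ hggg
  have hg2 : g*g = 0 := by
    refine hsp _ (fun r => ?_)
    linear_combination (norm := noncomm_ring) g*(f9 r)*(g*g) + (f9 r)*(g*g*g) + (r*g)*hcube
  have hgz : g = 0 := by
    refine hsp _ (fun r => ?_)
    linear_combination (norm := noncomm_ring) (f9 r)*g + r*hg2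
  linear_combination (norm := noncomm_ring) hgz - hgd

theorem stmt_15 {R : Type*} [Ring R]
    (htf : ∀ x : R, x + x = 0 → x = 0)
    (hsemiprime : ∀ a : R, (∀ r : R, a * r * a = 0) → a = 0)
    (e₁ : R) (he : e₁ * e₁ = e₁) (he0 : e₁ ≠ 0) (he1 : e₁ ≠ 1)
    (hspade : ∀ x : R, (∀ r : R, x * (e₁ * r * (1 - e₁)) = 0) →
      e₁ * x * e₁ = 0 ∧ (1 - e₁) * x * e₁ = 0)
    (hclub : ∀ x : R, (∀ r : R, x * ((1 - e₁) * r * (1 - e₁)) = 0) →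
      e₁ * x * (1 - e₁) = 0 ∧ (1 - e₁) * x * (1 - e₁) = 0)
    (δ τ : R → R)
    (hδadd : ∀ x y, δ (x + y) = δ x + δ y)
    (hτadd : ∀ x y, τ (x + y) = τ x + τ y)
    (hτ : ∀ a, τ (a ^ 2) = τ a * a + a * τ a)
    (hδ : ∀ a, δ (a ^ 2) = δ a * a + a * τ a) :
    ∃ τ' : R → R,
      (∀ x y, τ' (x + y) = τ' x + τ' y) ∧
      (∀ a b, τ' (a * b) = τ' a * b + a * τ' b) ∧
      (∀ a b, δ (a * b) = δ a * b + a * τ' b) := by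
  have hder := jordan_der htf hsemiprime τ hτadd hτ
  refine ⟨τ, hτadd, hder, ?_⟩
  -- μ := δ - τ satisfies μ(x²) = μ(x)x, hence in a unital ring μ(x) = μ(1)x.
  have hμsq : ∀ x : R, δ (x*x) - τ (x*x) = (δ x - τ x) * x := by
    intro x
    have h1 := hδ x
    have h2 := hτ x
    rw [sq] at h1 h2
    linear_combination (norm := noncomm_ring) h1 - h2
  have hpol : ∀ x y : R, (δ (x*y) - τ (x*y)) + (δ (y*x) - τ (y*x))
      = (δ x - τ x) * y + (δ y - τ y) * x := by
    intro x y
    have k := hμsq (x+y)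
    rw [show (x+y)*(x+y) = x*x + (x*y + y*x) + y*y from by noncomm_ring] at k
    simp only [hδadd, hτadd] at k
    linear_combination (norm := noncomm_ring) k - hμsq x - hμsq y
  have hmu : ∀ x : R, δ x - τ x = (δ 1 - τ 1) * x := by
    intro x
    have h := hpol x 1
    rw [mul_one, one_mul] at h
    linear_combination (norm := noncomm_ring) h
  intro a b
  linear_combination (norm := noncomm_ring) hmu (a*b) - (hmu a) * b + hder a b
end

section
/- Let R be a 2-torsion free unital ring and δ : R → R an additive generalized Jordan triple derivation with relating Jordan triple derivation τ (i.e., δ(aba) = δ(a)ba + aτ(b)a + abτ(a) and τ(aba) = τ(a)ba + aτ(b)a + abτ(a) for all a, b). Then τ(1) = 0 and τ is a Jordan derivation: τ(a²) = τ(a)a + aτ(a) for all a ∈ R. -/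
theorem stmt_17 {R : Type*} [Ring R]
    (htf : ∀ x : R, x + x = 0 → x = 0)
    (δ τ : R → R)
    (hδadd : ∀ x y, δ (x + y) = δ x + δ y)
    (hτadd : ∀ x y, τ (x + y) = τ x + τ y)
    (hτ : ∀ a b : R, τ (a * b * a) = τ a * b * a + a * τ b * a + a * b * τ a)
    (hδ : ∀ a b : R, δ (a * b * a) = δ a * b * a + a * τ b * a + a * b * τ a) :
    τ 1 = 0 ∧ ∀ a : R, τ (a ^ 2) = τ a * a + a * τ a := by
  have h1 : τ 1 = 0 := by
    have := hτ 1 1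
    simp only [one_mul, mul_one] at this
    have h2 : τ 1 + τ 1 = 0 := by
      have h3 : τ 1 + (τ 1 + τ 1) = τ 1 + 0 := by rw [add_zero, ← add_assoc, ← this]
      exact add_left_cancel h3
    exact htf _ h2
  refine ⟨h1, fun a => ?_⟩
  have := hτ a 1
  simp only [mul_one, h1, mul_zero, zero_mul, add_zero, zero_add] at this
  rw [sq]
  rw [this]
end

section
/- Let R be a 2-torsion free unital ring and δ : R → R an additive generalized Jordan triple derivation with relating Jordan triple derivation τ. Then δ is a generalized Jordan derivation: δ(a²) = δ(a)a + aτ(a) for all a ∈ R. -/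
theorem stmt_18 {R : Type*} [Ring R]
    (htf : ∀ x : R, x + x = 0 → x = 0)
    (δ τ : R → R)
    (hδadd : ∀ x y, δ (x + y) = δ x + δ y)
    (hτadd : ∀ x y, τ (x + y) = τ x + τ y)
    (hτ : ∀ a b : R, τ (a * b * a) = τ a * b * a + a * τ b * a + a * b * τ a)
    (hδ : ∀ a b : R, δ (a * b * a) = δ a * b * a + a * τ b * a + a * b * τ a) :
    ∀ a : R, δ (a ^ 2) = δ a * a + a * τ a := by
  have h1 : τ (1 : R) = 0 := by
    have := hτ 1 1
    simp only [mul_one, one_mul] at this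
    apply htf
    apply add_left_cancel (a := τ (1:R))
    rw [add_zero, ← add_assoc, ← this]
  intro a
  have := hδ a 1
  simp only [mul_one, one_mul, h1, mul_zero, zero_mul] at this
  rw [sq]
  rw [this, add_zero]
end

section
/- If S is a unit-semiprime ring, then the matrix ring Mₙ(S) is unit-semiprime, i.e., for A ∈ Mₙ(S), if AUB = 0 for all units U of Mₙ(S) with B = A, then A = 0. -/
open Matrix

section
variable {S : Type*} [Ring S] {n : ℕ}

/-- the scalar unit `u • 1` in matrices -/
def scalarUnit (n : ℕ) (u : Sˣ) : (Matrix (Fin n) (Fin n) S)ˣ :=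
  Units.map (Matrix.scalar (Fin n)).toMonoidHom u

lemma stdSq {i j : Fin n} (h : i ≠ j) (c d : S) :
    Matrix.single j i c * Matrix.single j i d = 0 :=
  Matrix.single_mul_single_of_ne (c := c) j i j h d

/-- transvection unit 1 + c E_{ji}, i ≠ j -/
def transUnit (i j : Fin n) (h : i ≠ j) (c : S) : (Matrix (Fin n) (Fin n) S)ˣ where
  val := 1 + Matrix.single j i c
  inv := 1 - Matrix.single j i c
  val_inv := by
    rw [add_mul, mul_sub, mul_sub, one_mul, mul_one, one_mul, stdSq h]
    abel
  inv_val := by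
    rw [sub_mul, mul_add, mul_add, one_mul, mul_one, one_mul, stdSq h]
    abel

lemma scalar_mul_std (i j : Fin n) (u : S) :
    Matrix.scalar (Fin n) u * Matrix.single j i (1 : S)
      = Matrix.single j i u := by
  ext a b
  rw [Matrix.scalar_apply, Matrix.diagonal_mul]
  by_cases h1 : j = a
  · subst h1
    by_cases h2 : i = b <;> simp [Matrix.single, h2]
  · simp [Matrix.single, h1]

end

theorem stmt_19 {S : Type*} [Ring S] (n : ℕ)
    (hS : ∀ a : S, (∀ u : Sˣ, a * (u : S) * a = 0) → a = 0) :
    ∀ A : Matrix (Fin n) (Fin n) S,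
      (∀ U : (Matrix (Fin n) (Fin n) S)ˣ, A * U.val * A = 0) →
      A = 0 := by
  intro A hA
  have hscal : ∀ u : Sˣ, A * Matrix.scalar (Fin n) (u : S) * A = 0 := fun u =>
    hA (scalarUnit n u)
  -- for i ≠ j : A * stdBasisMatrix j i u * A = 0
  have hE : ∀ (i j : Fin n), i ≠ j → ∀ u : Sˣ,
      A * Matrix.single j i (u : S) * A = 0 := by
    intro i j hij u
    have h1 := hA (scalarUnit n u * transUnit i j hij 1)
    have h2 := hscal u
    have hval : (scalarUnit n u * transUnit i j hij 1).val
        = Matrix.scalar (Fin n) (u : S) + Matrix.single j i (u : S) := by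
      simp only [Units.val_mul, scalarUnit, transUnit, Units.coe_map,
        RingHom.toMonoidHom_eq_coe, MonoidHom.coe_coe]
      rw [Matrix.mul_add, mul_one, scalar_mul_std]
    rw [hval, Matrix.mul_add, Matrix.add_mul, h2] at h1
    simpa using h1
  -- off-diagonal entry relation
  have off : ∀ (i j k l : Fin n), i ≠ j → ∀ u : Sˣ, A k j * u * A i l = 0 := by
    intro i j k l hij u
    have h := congrFun (congrFun (hE i j hij u) k) l
    have h' : ∀ x, (A * Matrix.single j i (u : S)) k x
        = if x = i then A k j * (u : S) else 0 := by
      intro x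
      by_cases hx : x = i
      · subst hx; simp
      · simp [hx]
    rw [Matrix.mul_apply] at h
    simp only [Matrix.zero_apply] at h
    simp_rw [h', ite_mul, zero_mul, Finset.sum_ite_eq', Finset.mem_univ, if_true] at h
    simpa [mul_assoc] using h
  have hoff : ∀ a b : Fin n, a ≠ b → A a b = 0 := fun a b h =>
    hS _ (fun u => off a b a b h u)
  ext k l
  rcases eq_or_ne k l with rfl | hkl
  · refine hS _ (fun u => ?_)
    have hsum := congrFun (congrFun (hscal u) k) k
    simp only [Matrix.mul_apply, Matrix.scalar_apply, Matrix.diagonal_apply, Matrix.zero_apply,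
      mul_ite, ite_mul, mul_zero, zero_mul, Finset.sum_ite_eq, Finset.sum_ite_eq',
      Finset.mem_univ, if_true] at hsum
    rw [Finset.sum_eq_single k] at hsum
    · exact hsum
    · intro b _ hb
      rw [hoff k b (Ne.symm hb), zero_mul, zero_mul]
    · simp
  · simp [hoff k l hkl]
end
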